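/- For every v ∈ ℂ^d, the operator Ξ_v is an algebra homomorphism for the convolution product, i.e. Ξ_v(γ★δ) = (Ξ_v γ)★(Ξ_v δ) for all γ, δ ∈ ℂ^W; moreover Ξ_v maps G into G and maps 𝔤 into 𝔤. -/
import Mathlib


open scoped BigOperators

/-- Convolution product on `ℂ^W`: `(δ★δ′)_w = Σ_{w=w₁w₂} δ_{w₁} δ′_{w₂}`. -/
noncomputable def conv {A : Type*} (x y : List A → ℂ) : List A → ℂ :=
  fun w => ∑ i ∈ Finset.range (w.length + 1), x (w.take i) * y (w.drop i)

/-- Shuffle product of two words, as a multiset of words. -/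
def shuffle {A : Type*} : List A → List A → Multiset (List A)
  | [], w => {w}
  | w, [] => {w}
  | a :: u, b :: v =>
      ((shuffle u (b :: v)).map (a :: ·)) + ((shuffle (a :: u) v).map (b :: ·))

/-- Membership in the group `G`: the shuffle relations with `γ_∅ = 1`. -/
def isGrp {A : Type*} (γ : List A → ℂ) : Prop :=
  γ [] = 1 ∧ ∀ w w' : List A, γ w * γ w' = ((shuffle w w').map γ).sum

/-- Membership in the Lie algebra `𝔤`. -/
def isLie {A : Type*} (β : List A → ℂ) : Prop :=
  β [] = 0 ∧ ∀ w w' : List A, w ≠ [] → w' ≠ [] → ((shuffle w w').map β).sum = 0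

/-- The unit `1` of the convolution product. -/
def unitCW {A : Type*} : List A → ℂ := fun w => match w with | [] => 1 | _ => 0

/-- `ν^v_ℓ = Σ_j v_j ν_{j,ℓ}` for a letter `ℓ`. -/
noncomputable def nuL {A : Type*} {d : ℕ} (ν : Fin d → A → ℂ) (v : Fin d → ℂ) (ℓ : A) : ℂ :=
  ∑ j, v j * ν j ℓ

/-- `ν^v_w = ν^v_{ℓ₁} + ⋯ + ν^v_{ℓ_n}` for a word `w = ℓ₁⋯ℓ_n`. -/
noncomputable def nuW {A : Type*} {d : ℕ} (ν : Fin d → A → ℂ) (v : Fin d → ℂ) (w : List A) : ℂ :=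
  (w.map (nuL ν v)).sum

/-- The operator `Ξ_v`: `(Ξ_v δ)_w = exp(ν^v_w) δ_w`. -/
noncomputable def XiOp {A : Type*} {d : ℕ} (ν : Fin d → A → ℂ) (v : Fin d → ℂ)
    (δ : List A → ℂ) : List A → ℂ :=
  fun w => Complex.exp (nuW ν v w) * δ w

/-- The operator `ξ_v`: `(ξ_v δ)_w = ν^v_w δ_w`. -/
noncomputable def xiOp {A : Type*} {d : ℕ} (ν : Fin d → A → ℂ) (v : Fin d → ℂ)
    (δ : List A → ℂ) : List A → ℂ :=
  fun w => nuW ν v w * δ w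


lemma nuW_append {A : Type*} {d : ℕ} (ν : Fin d → A → ℂ) (v : Fin d → ℂ)
    (w w' : List A) : nuW ν v (w ++ w') = nuW ν v w + nuW ν v w' := by
  simp [nuW]

lemma shuffle_nuW {A : Type*} {d : ℕ} (ν : Fin d → A → ℂ) (v : Fin d → ℂ) :
    ∀ w w' : List A, ∀ u ∈ shuffle w w', nuW ν v u = nuW ν v w + nuW ν v w'
  | [], w', u, hu => by
      simp [shuffle] at hu; simp [hu, nuW]
  | a :: w, [], u, hu => by
      simp [shuffle] at hu; simp [hu, nuW]
  | a :: w, b :: w', u, hu => by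
      rw [shuffle] at hu
      simp only [Multiset.mem_add, Multiset.mem_map] at hu
      rcases hu with ⟨x, hx, rfl⟩ | ⟨x, hx, rfl⟩
      · have := shuffle_nuW ν v w (b :: w') x hx
        simp only [nuW, List.map_cons, List.sum_cons] at this ⊢
        rw [this]; ring
      · have := shuffle_nuW ν v (a :: w) w' x hx
        simp only [nuW, List.map_cons, List.sum_cons] at this ⊢
        rw [this]; ring

lemma shuffle_sum_Xi {A : Type*} {d : ℕ} (ν : Fin d → A → ℂ) (v : Fin d → ℂ)
    (β : List A → ℂ) (w w' : List A) :
    ((shuffle w w').map (XiOp ν v β)).sum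
      = Complex.exp (nuW ν v w + nuW ν v w') * ((shuffle w w').map β).sum := by
  rw [← Multiset.sum_map_mul_left]
  apply congrArg Multiset.sum
  apply Multiset.map_congr rfl
  intro u hu
  simp [XiOp, shuffle_nuW ν v w w' u hu]

/-- `Ξ_v` is a homomorphism for the convolution product and maps
`G` into `G` and `𝔤` into `𝔤`. -/
theorem stmt3 {A : Type*} [Countable A] {d : ℕ} (hd : 1 ≤ d)
    (ν : Fin d → A → ℂ) (v : Fin d → ℂ) :
    (∀ γ δ : List A → ℂ, XiOp ν v (conv γ δ) = conv (XiOp ν v γ) (XiOp ν v δ)) ∧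
    (∀ γ : List A → ℂ, isGrp γ → isGrp (XiOp ν v γ)) ∧
    (∀ β : List A → ℂ, isLie β → isLie (XiOp ν v β)) := by
  have hconv : ∀ γ δ : List A → ℂ, XiOp ν v (conv γ δ) = conv (XiOp ν v γ) (XiOp ν v δ) := by
    intro γ δ
    funext w
    simp only [XiOp, conv, Finset.mul_sum]
    apply Finset.sum_congr rfl
    intro i hi
    have h : nuW ν v w = nuW ν v (w.take i) + nuW ν v (w.drop i) := by
      conv_lhs => rw [← List.take_append_drop i w]
      exact nuW_append ν v _ _
    rw [h, Complex.exp_add]; ring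
  refine ⟨hconv, ?_, ?_⟩
  · rintro γ ⟨h1, h2⟩
    refine ⟨by simp [XiOp, nuW, h1], fun w w' => ?_⟩
    rw [shuffle_sum_Xi, ← h2]
    simp [XiOp, Complex.exp_add]; ring
  · rintro β ⟨h1, h2⟩
    refine ⟨by simp [XiOp, nuW, h1], fun w w' hw hw' => ?_⟩
    rw [shuffle_sum_Xi, h2 w w' hw hw', mul_zero]
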